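/- Let A be an associative ring containing a nonzero element a with a*a = 0. Then the set D = {v : Fin 2 → A | v 0 = 0 ∨ v 1 = 0} is not an algebraic set over A; that is, there is no subset T of FreeRing (Fin 2) with D = {v : Fin 2 → A | ∀ w ∈ T, FreeRing.lift v w = 0}. (Hence such a ring is not an equational domain.) -/
import Mathlib

theorem union_of_axes_not_algebraic_of_square_zero
    (A : Type*) [Ring A] (a : A) (ha : a ≠ 0) (haa : a * a = 0) :
    ¬ ∃ T : Set (FreeRing (Fin 2)),
      {v : Fin 2 → A | v 0 = 0 ∨ v 1 = 0} =
        {v : Fin 2 → A | ∀ w ∈ T, FreeRing.lift v w = 0} := by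
  rintro ⟨T, hT⟩
  have key : ∀ w : FreeRing (Fin 2), ∃ c p q : ℤ,
      FreeRing.lift ![a, 0] w = c • (1 : A) + p • a ∧
      FreeRing.lift ![0, a] w = c • (1 : A) + q • a ∧
      FreeRing.lift ![a, a] w = c • (1 : A) + (p + q) • a ∧
      FreeRing.lift ![(0 : A), 0] w = c • (1 : A) := by
    intro w
    induction w using FreeRing.induction_on with
    | hn1 => exact ⟨-1, 0, 0, by simp⟩
    | hb i =>
      fin_cases i
      · exact ⟨0, 1, 0, by simp [FreeRing.lift_of]⟩
      · exact ⟨0, 0, 1, by simp [FreeRing.lift_of]⟩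
    | ha x y hx hy =>
      obtain ⟨c, p, q, h1, h2, h3, h4⟩ := hx
      obtain ⟨c', p', q', h1', h2', h3', h4'⟩ := hy
      exact ⟨c + c', p + p', q + q', by
        simp only [map_add, h1, h2, h3, h4, h1', h2', h3', h4', add_smul]
        refine ⟨?_, ?_, ?_, ?_⟩ <;> first | trivial | module⟩
    | hm x y hx hy =>
      obtain ⟨c, p, q, h1, h2, h3, h4⟩ := hx
      obtain ⟨c', p', q', h1', h2', h3', h4'⟩ := hy
      have hmul : ∀ u v u' v' : ℤ, (u • (1:A) + v • a) * (u' • (1:A) + v' • a) =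
          (u * u') • (1:A) + (u * v' + v * u') • a := by
        intro u v u' v'
        simp only [add_mul, mul_add, smul_mul_smul_comm, haa, smul_zero, mul_one, one_mul,
          add_zero, add_smul]
        module
      refine ⟨c * c', c * p' + p * c', c * q' + q * c', ?_, ?_, ?_, ?_⟩ <;>
        simp only [map_mul, h1, h2, h3, h4, h1', h2', h3', h4', hmul]
      · congr 1
        ring
      · rw [smul_mul_smul_comm, one_mul]
  have hzero : (fun _ => (0 : A)) ∈ {v : Fin 2 → A | ∀ w ∈ T, FreeRing.lift v w = 0} := by
    rw [← hT]; left; rfl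
  have h10 : ![a, (0:A)] ∈ {v : Fin 2 → A | ∀ w ∈ T, FreeRing.lift v w = 0} := by
    rw [← hT]; right; rfl
  have h01 : ![(0:A), a] ∈ {v : Fin 2 → A | ∀ w ∈ T, FreeRing.lift v w = 0} := by
    rw [← hT]; left; rfl
  have h11 : ![a, a] ∈ {v : Fin 2 → A | ∀ w ∈ T, FreeRing.lift v w = 0} := by
    intro w hw
    obtain ⟨c, p, q, h1, h2, h3, h4⟩ := key w
    have hc : c • (1 : A) = 0 := by
      have := hzero w hw
      have he : (fun _ => (0:A)) = ![(0:A), 0] := by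
        funext i; fin_cases i <;> rfl
      rw [he] at this
      rw [← h4, this]
    have hp : p • a = 0 := by have := h10 w hw; rw [h1, hc, zero_add] at this; exact this
    have hq : q • a = 0 := by have := h01 w hw; rw [h2, hc, zero_add] at this; exact this
    rw [h3, hc, zero_add, add_smul, hp, hq, add_zero]
  rw [← hT] at h11
  rcases h11 with h | h <;> exact ha (by simpa using h)
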